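/- Let L be a bounded lattice, n₁ ∈ ℕ, and κ an infinite cardinal. If L^{n₁} contains an antichain of cardinality κ and L is n₁-o.p.c., then there is a family of 2^κ many pairwise incomparable n₁-ary polynomial functions on L (in the pointwise order); consequently there exists n₂ ∈ ℕ such that L^{n₂} contains an antichain of cardinality 2^κ. -/

import Mathlib

universe u

/-- `IsPolyFn L n p` says that `p : (Fin n → L) → L` is an `n`-ary lattice polynomial
function on `L`. -/
inductive IsPolyFn (L : Type u) [Lattice L] (n : ℕ) : ((Fin n → L) → L) → Prop
  | proj (i : Fin n) : IsPolyFn L n fun x => x i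
  | const (c : L) : IsPolyFn L n fun _ => c
  | sup {p q : (Fin n → L) → L} : IsPolyFn L n p → IsPolyFn L n q →
      IsPolyFn L n fun x => p x ⊔ q x
  | inf {p q : (Fin n → L) → L} : IsPolyFn L n p → IsPolyFn L n q →
      IsPolyFn L n fun x => p x ⊓ q x

/-- The "shape" of a lattice polynomial: a lattice term in `n` variables with anonymous
constant slots. -/
inductive PolyShape (n : ℕ) : Type u
  | var : Fin n → PolyShape n
  | cst : PolyShape n
  | sup : PolyShape n → PolyShape n → PolyShape n
  | inf : PolyShape n → PolyShape n → PolyShape n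

namespace PolyShape

/-- Number of constant slots. -/
def numC {n : ℕ} : PolyShape.{u} n → ℕ
  | var _ => 0
  | cst => 1
  | sup a b => numC a + numC b
  | inf a b => numC a + numC b

/-- Encoding into `ℕ`. -/
def toNat {n : ℕ} : PolyShape.{u} n → ℕ
  | var i => Nat.pair 0 i
  | cst => Nat.pair 1 0
  | sup a b => Nat.pair 2 (Nat.pair a.toNat b.toNat)
  | inf a b => Nat.pair 3 (Nat.pair a.toNat b.toNat)

theorem toNat_injective {n : ℕ} : Function.Injective (toNat (n := n)) := by
  intro a
  induction a with
  | var i =>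
    intro b hb
    cases b <;> simp only [toNat, Nat.pair_eq_pair] at hb <;> try omega
    obtain ⟨-, h⟩ := hb
    exact congrArg var (Fin.val_injective h)
  | cst =>
    intro b hb
    cases b <;> simp only [toNat, Nat.pair_eq_pair] at hb <;> try omega
    rfl
  | sup a₁ a₂ ih₁ ih₂ =>
    intro b hb
    cases b <;> simp only [toNat, Nat.pair_eq_pair] at hb <;> try omega
    obtain ⟨-, h1, h2⟩ := hb
    rw [ih₁ h1, ih₂ h2]
  | inf a₁ a₂ ih₁ ih₂ =>
    intro b hb
    cases b <;> simp only [toNat, Nat.pair_eq_pair] at hb <;> try omega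
    obtain ⟨-, h1, h2⟩ := hb
    rw [ih₁ h1, ih₂ h2]

instance {n : ℕ} : Countable (PolyShape.{u} n) := toNat_injective.countable

variable {L : Type u} [Lattice L]

/-- Evaluate a shape at a tuple of constants and a tuple of variables. -/
def evalS {n : ℕ} : (s : PolyShape.{u} n) → (Fin (numC s) → L) → (Fin n → L) → L
  | var i, _, x => x i
  | cst, c, _ => c ⟨0, Nat.one_pos⟩
  | sup a b, c, x =>
      evalS a (fun j => c (Fin.castAdd _ j)) x ⊔ evalS b (fun j => c (Fin.natAdd _ j)) x
  | inf a b, c, x =>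
      evalS a (fun j => c (Fin.castAdd _ j)) x ⊓ evalS b (fun j => c (Fin.natAdd _ j)) x

theorem evalS_mono {n : ℕ} (s : PolyShape.{u} n) (x : Fin n → L) :
    Monotone fun c : Fin (numC s) → L => evalS s c x := by
  induction s with
  | var i => exact fun c d _ => le_rfl
  | cst => exact fun c d h => h ⟨0, Nat.one_pos⟩
  | sup a b iha ihb =>
    exact fun c d h => sup_le_sup (iha (fun j => h _)) (ihb (fun j => h _))
  | inf a b iha ihb =>
    exact fun c d h => inf_le_inf (iha (fun j => h _)) (ihb (fun j => h _))

theorem exists_repr {n : ℕ} {p : (Fin n → L) → L} (hp : IsPolyFn L n p) :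
    ∃ (s : PolyShape.{u} n) (c : Fin (numC s) → L), p = evalS s c := by
  induction hp with
  | proj i => exact ⟨var i, Fin.elim0, rfl⟩
  | const c => exact ⟨cst, fun _ => c, rfl⟩
  | sup hp hq ihp ihq =>
    obtain ⟨s₁, c₁, rfl⟩ := ihp
    obtain ⟨s₂, c₂, rfl⟩ := ihq
    refine ⟨sup s₁ s₂, Fin.append c₁ c₂, ?_⟩
    funext x
    show evalS s₁ c₁ x ⊔ evalS s₂ c₂ x = evalS s₁ _ x ⊔ evalS s₂ _ x
    congr 1
    · congr 1; funext j; exact (Fin.append_left c₁ c₂ j).symm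
    · congr 1; funext j; exact (Fin.append_right c₁ c₂ j).symm
  | inf hp hq ihp ihq =>
    obtain ⟨s₁, c₁, rfl⟩ := ihp
    obtain ⟨s₂, c₂, rfl⟩ := ihq
    refine ⟨inf s₁ s₂, Fin.append c₁ c₂, ?_⟩
    funext x
    show evalS s₁ c₁ x ⊓ evalS s₂ c₂ x = evalS s₁ _ x ⊓ evalS s₂ _ x
    congr 1
    · congr 1; funext j; exact (Fin.append_left c₁ c₂ j).symm
    · congr 1; funext j; exact (Fin.append_right c₁ c₂ j).symm

theorem evalS_cast {n : ℕ} {s t : PolyShape.{u} n} (h : s = t) (c : Fin (numC s) → L) :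
    evalS t (fun j => c (Fin.cast (congrArg numC h).symm j)) = evalS s c := by
  subst h; rfl

end PolyShape

/-- If `L^{n₁}` has an antichain of infinite cardinality `κ` and `L` is `n₁`-o.p.c., then
there are `2^κ` many pairwise incomparable `n₁`-ary polynomial functions on `L`;
consequently some `L^{n₂}` has an antichain of cardinality `2^κ`. -/
theorem antichain_and_opc_give_bigger_antichain (L : Type u) [Lattice L] [BoundedOrder L]
    (n₁ : ℕ) (κ : Cardinal.{u}) (hκ : Cardinal.aleph0 ≤ κ)
    (A : Set (Fin n₁ → L)) (hA : IsAntichain (· ≤ ·) A) (hcard : Cardinal.mk A = κ)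
    (hopc : ∀ f : (Fin n₁ → L) → L, Monotone f → IsPolyFn L n₁ f) :
    (∃ (ι : Type u) (P : ι → (Fin n₁ → L) → L), Cardinal.mk ι = 2 ^ κ ∧
        (∀ i, IsPolyFn L n₁ (P i)) ∧
        ∀ i j : ι, i ≠ j → ¬P i ≤ P j ∧ ¬P j ≤ P i) ∧
    ∃ (n₂ : ℕ) (B : Set (Fin n₂ → L)),
      IsAntichain (· ≤ ·) B ∧ Cardinal.mk B = 2 ^ κ := by
  classical
  -- `L` is nontrivial
  have hbotne : (⊥ : L) ≠ ⊤ := by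
    intro h
    have hsub : Subsingleton L := ⟨fun x y => by
      have hx : x = ⊥ := le_antisymm (h ▸ le_top) bot_le
      have hy : y = ⊥ := le_antisymm (h ▸ le_top) bot_le
      rw [hx, hy]⟩
    have : Subsingleton A := ⟨fun x y => Subtype.ext (funext fun i => Subsingleton.elim _ _)⟩
    have h1 : Cardinal.mk A ≤ 1 := Cardinal.le_one_iff_subsingleton.mpr this
    have h2 : κ ≤ 1 := hcard ▸ h1
    exact absurd (hκ.trans h2) Cardinal.one_lt_aleph0.not_ge
  -- an equivalence doubling `A`
  have hAA : Cardinal.mk (A ⊕ A) = Cardinal.mk A := by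
    rw [Cardinal.mk_sum]
    simp only [Cardinal.lift_id]
    rw [hcard]
    exact Cardinal.add_eq_self hκ
  obtain ⟨e⟩ : Nonempty ((A ⊕ A) ≃ A) := Cardinal.eq.mp hAA
  -- the index type and the family
  set ι := A → Bool with hιdef
  have hι : Cardinal.mk ι = 2 ^ κ := by
    have : Cardinal.mk ι = Cardinal.mk (Set A) :=
      Cardinal.mk_congr (Equiv.arrowCongr (Equiv.refl A) Equiv.propEquivBool.symm)
    rw [this, Cardinal.mk_set, hcard]
  let sel : ι → (A ⊕ A) → Prop := fun g q =>
    Sum.elim (fun a => g a = false) (fun a => g a = true) q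
  let P : ι → (Fin n₁ → L) → L := fun g x =>
    if ∃ q : A ⊕ A, sel g q ∧ ((e q : Fin n₁ → L) ≤ x) then ⊤ else ⊥
  have hmono : ∀ g, Monotone (P g) := by
    intro g x y hxy
    by_cases hx : ∃ q : A ⊕ A, sel g q ∧ ((e q : Fin n₁ → L) ≤ x)
    · have : P g y = ⊤ :=
        if_pos ⟨hx.choose, hx.choose_spec.1, hx.choose_spec.2.trans hxy⟩
      rw [this]; exact le_top
    · have : P g x = ⊥ := if_neg hx
      rw [this]; exact bot_le
  have key : ∀ g h : ι, g ≠ h → ¬P g ≤ P h := by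
    intro g h hgh hle
    obtain ⟨a, ha⟩ : ∃ a, g a ≠ h a := by
      by_contra hc
      push_neg at hc
      exact hgh (funext hc)
    set q₀ : A ⊕ A := if g a = true then Sum.inr a else Sum.inl a with hq₀
    have hselg : sel g q₀ := by
      cases hb : g a <;> simp [sel, hq₀, hb]
    set v : Fin n₁ → L := (e q₀ : Fin n₁ → L) with hv
    have h1 : P g v = ⊤ := if_pos ⟨q₀, hselg, le_rfl⟩
    have h2 : P h v = ⊥ := by
      apply if_neg
      rintro ⟨q, hq, hle'⟩
      have hqeq : (e q : Fin n₁ → L) = v := by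
        by_contra hne
        exact hA (e q).2 (e q₀).2 hne hle'
      have : q = q₀ := e.injective (Subtype.coe_injective hqeq)
      subst this
      cases hb : g a <;> rw [hb] at hq₀ <;> simp only [hq₀, Bool.false_eq_true,
        if_false, if_true, sel, Sum.elim_inl, Sum.elim_inr] at hq hselg <;>
        exact ha (by rw [hb, hq])
    have := hle v
    rw [h1, h2] at this
    exact hbotne (le_antisymm bot_le this)
  have hpoly : ∀ g, IsPolyFn L n₁ (P g) := fun g => hopc (P g) (hmono g)
  refine ⟨⟨ι, P, hι, hpoly, fun i j hij => ⟨key i j hij, key j i hij.symm⟩⟩, ?_⟩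
  -- part 2: extract constants of a common shape
  have hrep : ∀ g : ι, ∃ (s : PolyShape.{u} n₁) (c : Fin (PolyShape.numC s) → L),
      P g = PolyShape.evalS s c := fun g => PolyShape.exists_repr (hpoly g)
  choose sh cs hcs using hrep
  have h2κ : Cardinal.aleph0 ≤ (2 : Cardinal.{u}) ^ κ := hκ.trans (Cardinal.cantor κ).le
  have hcount : Cardinal.mk (PolyShape.{u} n₁) < ((2 : Cardinal.{u}) ^ κ).ord.cof :=
    lt_of_le_of_lt Cardinal.mk_le_aleph0
      (lt_of_le_of_lt hκ (Cardinal.lt_cof_power hκ (by norm_num : (1 : Cardinal.{u}) < 2)))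
  obtain ⟨s, hs⟩ := Cardinal.infinite_pigeonhole_card sh (2 ^ κ) (by rw [hι]) h2κ hcount
  -- the fiber over `s`
  let Fib := (sh ⁻¹' {s} : Set ι)
  have hfib : ∀ g : Fib, sh g.1 = s := fun g => g.2
  let F : Fib → (Fin (PolyShape.numC s) → L) := fun g j =>
    cs g.1 (Fin.cast (congrArg PolyShape.numC (hfib g)).symm j)
  have hFrep : ∀ g : Fib, P g.1 = PolyShape.evalS s (F g) := by
    intro g
    rw [hcs g.1]
    exact (PolyShape.evalS_cast (hfib g) (cs g.1)).symm
  have hFinj : Function.Injective F := by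
    intro g₁ g₂ hF
    by_contra hne
    have hne' : g₁.1 ≠ g₂.1 := fun h => hne (Subtype.ext h)
    have : P g₁.1 = P g₂.1 := by rw [hFrep g₁, hFrep g₂, hF]
    exact key g₁.1 g₂.1 hne' this.le
  refine ⟨PolyShape.numC s, Set.range F, ?_, ?_⟩
  · rintro x ⟨g₁, rfl⟩ y ⟨g₂, rfl⟩ hne hle
    have hne' : g₁.1 ≠ g₂.1 := by
      intro h
      exact hne (congrArg F (Subtype.ext h))
    have hPle : P g₁.1 ≤ P g₂.1 := by
      intro x
      rw [hFrep g₁, hFrep g₂]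
      exact PolyShape.evalS_mono s x hle
    exact key g₁.1 g₂.1 hne' hPle
  · rw [Cardinal.mk_range_eq F hFinj]
    refine le_antisymm ?_ hs
    calc Cardinal.mk Fib ≤ Cardinal.mk ι := Cardinal.mk_subtype_le _
      _ = 2 ^ κ := hι
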